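/- Let A ∈ ℝ^{n×N} be a Parseval frame and let T ⊆ {1,…,N} with |T| < n. If the matrix A_{T^c} A_{T^c}* is invertible, then ‖A_T A_T*‖₂ < 1 and ‖A_{T^c} A_{T^c}*‖₂ = 1. -/

import Mathlib

open Matrix Finset Filter Topology

/-- Euclidean norm of a vector. -/
noncomputable def enorm {k : ℕ} (x : Fin k → ℝ) : ℝ := Real.sqrt (∑ i, x i ^ 2)

/-- `x` has at most `s` nonzero entries. -/
def IsSparse {k : ℕ} (s : ℕ) (x : Fin k → ℝ) : Prop :=
  (Finset.univ.filter fun i => x i ≠ 0).card ≤ s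

/-- Spectral norm (ℓ²-operator norm) of a matrix. -/
noncomputable def specNorm {m k : Type*} [Fintype m] [Fintype k] [DecidableEq k]
    (M : Matrix m k ℝ) : ℝ :=
  ‖LinearMap.toContinuousLinearMap (Matrix.toEuclideanLin M)‖

/-- `cols A T` is the submatrix of `A` consisting of the columns indexed by `T`. -/
def cols {n N : ℕ} (A : Matrix (Fin n) (Fin N) ℝ) (T : Finset (Fin N)) :
    Matrix (Fin n) {i : Fin N // i ∈ T} ℝ := Matrix.of fun r c => A r c.1

/-- `subv x T` is the subvector of `x` consisting of the entries indexed by `T`. -/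
def subv {N : ℕ} (x : Fin N → ℝ) (T : Finset (Fin N)) : {i : Fin N // i ∈ T} → ℝ :=
  fun i => x i.1

/-- The feedback term `(A_T* A_T)⁻¹ A_T* A_{Tᶜ} x_{Tᶜ}`. -/
noncomputable def fb {n N : ℕ} (A : Matrix (Fin n) (Fin N) ℝ) (T : Finset (Fin N))
    (x : Fin N → ℝ) : {i : Fin N // i ∈ T} → ℝ :=
  ((cols A T)ᵀ * cols A T)⁻¹ *ᵥ ((cols A T)ᵀ *ᵥ (cols A Tᶜ *ᵥ subv x Tᶜ))

open scoped InnerProductSpace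

namespace Stmt0Aux

variable {n : ℕ}

/-- The CLM associated to a square matrix. -/
noncomputable def clm (M : Matrix (Fin n) (Fin n) ℝ) :
    EuclideanSpace ℝ (Fin n) →L[ℝ] EuclideanSpace ℝ (Fin n) :=
  Matrix.toEuclideanCLM (𝕜 := ℝ) M

lemma specNorm_eq_clm (M : Matrix (Fin n) (Fin n) ℝ) : specNorm M = ‖clm M‖ := by
  rfl

lemma clm_apply (M : Matrix (Fin n) (Fin n) ℝ) (x : EuclideanSpace ℝ (Fin n)) (i : Fin n) :
    clm M x i = (M *ᵥ (fun j => x j)) i := by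
  rfl

lemma inner_clm (M : Matrix (Fin n) (Fin n) ℝ) (x : EuclideanSpace ℝ (Fin n)) :
    ⟪x, clm M x⟫_ℝ = (fun j => x j) ⬝ᵥ (M *ᵥ (fun j => x j)) := by
  rw [PiLp.inner_apply]
  simp only [RCLike.inner_apply, conj_trivial, dotProduct]
  exact Finset.sum_congr rfl fun i _ => by rw [clm_apply]; ring

lemma isSymm_clm {M : Matrix (Fin n) (Fin n) ℝ} (hM : M.IsHermitian) :
    LinearMap.IsSymmetric (clm M : EuclideanSpace ℝ (Fin n) →ₗ[ℝ] EuclideanSpace ℝ (Fin n)) := by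
  rw [clm, Matrix.coe_toEuclideanCLM_eq_toEuclideanLin]
  exact Matrix.isHermitian_iff_isSymmetric.mp hM

lemma mul_transpose_isHermitian {m : Type*} [Fintype m]
    (B : Matrix (Fin n) m ℝ) : (B * Bᵀ).IsHermitian := by
  have : Bᵀ = Bᴴ := by ext i j; simp [Matrix.conjTranspose_apply]
  rw [this]
  exact Matrix.isHermitian_mul_conjTranspose_self B

lemma inner_clm_mul_transpose_nonneg {m : Type*} [Fintype m]
    (B : Matrix (Fin n) m ℝ) (x : EuclideanSpace ℝ (Fin n)) :
    0 ≤ ⟪x, clm (B * Bᵀ) x⟫_ℝ := by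
  rw [inner_clm]
  set v : Fin n → ℝ := fun j => x j
  rw [← Matrix.mulVec_mulVec, Matrix.dotProduct_mulVec, ← Matrix.mulVec_transpose]
  exact Finset.sum_nonneg fun i _ => mul_self_nonneg _

/-- Norm bound via eigenvalue bounds for a symmetric CLM on Euclidean space. -/
lemma opNorm_le_of_ev (f : EuclideanSpace ℝ (Fin n) →L[ℝ] EuclideanSpace ℝ (Fin n))
    (hf : LinearMap.IsSymmetric (f : EuclideanSpace ℝ (Fin n) →ₗ[ℝ] EuclideanSpace ℝ (Fin n)))
    (c : ℝ) (hc : 0 ≤ c)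
    (hev : ∀ i, |hf.eigenvalues finrank_euclideanSpace_fin i| ≤ c) :
    ‖f‖ ≤ c := by
  apply f.opNorm_le_bound hc
  intro x
  set b := hf.eigenvectorBasis finrank_euclideanSpace_fin with hb
  set μ := hf.eigenvalues finrank_euclideanSpace_fin with hμ
  have h1 : ‖f x‖ = ‖b.repr (f x)‖ := (b.repr.norm_map _).symm
  have h2 : ‖x‖ = ‖b.repr x‖ := (b.repr.norm_map _).symm
  rw [h1, h2, EuclideanSpace.norm_eq, EuclideanSpace.norm_eq]
  have hrepr : ∀ i, b.repr (f x) i = μ i * b.repr x i := fun i =>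
    hf.eigenvectorBasis_apply_self_apply finrank_euclideanSpace_fin x i
  have hsum : (∑ i, ‖b.repr (f x) i‖ ^ 2) ≤ c ^ 2 * ∑ i, ‖b.repr x i‖ ^ 2 := by
    rw [Finset.mul_sum]
    apply Finset.sum_le_sum
    intro i _
    rw [hrepr i]
    simp only [Real.norm_eq_abs, sq_abs, mul_pow]
    apply mul_le_mul_of_nonneg_right _ (sq_nonneg _)
    calc μ i ^ 2 = |μ i| ^ 2 := (sq_abs _).symm
      _ ≤ c ^ 2 := by
        apply pow_le_pow_left₀ (abs_nonneg _) (hev i) 2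
  calc Real.sqrt (∑ i, ‖b.repr (f x) i‖ ^ 2)
      ≤ Real.sqrt (c ^ 2 * ∑ i, ‖b.repr x i‖ ^ 2) := Real.sqrt_le_sqrt hsum
    _ = c * Real.sqrt (∑ i, ‖b.repr x i‖ ^ 2) := by
        rw [Real.sqrt_mul (sq_nonneg c), Real.sqrt_sq hc]

lemma ev_eq_inner (f : EuclideanSpace ℝ (Fin n) →L[ℝ] EuclideanSpace ℝ (Fin n))
    (hf : LinearMap.IsSymmetric (f : EuclideanSpace ℝ (Fin n) →ₗ[ℝ] EuclideanSpace ℝ (Fin n)))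
    (i : Fin n) :
    hf.eigenvalues finrank_euclideanSpace_fin i =
      ⟪hf.eigenvectorBasis finrank_euclideanSpace_fin i,
       f (hf.eigenvectorBasis finrank_euclideanSpace_fin i)⟫_ℝ := by
  set b := hf.eigenvectorBasis finrank_euclideanSpace_fin with hb
  have happ : f (b i) = hf.eigenvalues finrank_euclideanSpace_fin i • b i :=
    hf.apply_eigenvectorBasis finrank_euclideanSpace_fin i
  rw [happ, real_inner_smul_right, real_inner_self_eq_norm_sq, b.orthonormal.1 i]
  ring

end Stmt0Aux

/-- If `A` is a Parseval frame, `|T| < n` and `A_{Tᶜ} A_{Tᶜ}*` is invertible,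
then `‖A_T A_T*‖₂ < 1` and `‖A_{Tᶜ} A_{Tᶜ}*‖₂ = 1`. -/
theorem stmt_0 {n N : ℕ} (hnN : n < N) (A : Matrix (Fin n) (Fin N) ℝ)
    (hParseval : A * Aᵀ = 1) (T : Finset (Fin N)) (hT : T.card < n)
    (hinv : IsUnit (cols A Tᶜ * (cols A Tᶜ)ᵀ)) :
    specNorm (cols A T * (cols A T)ᵀ) < 1 ∧ specNorm (cols A Tᶜ * (cols A Tᶜ)ᵀ) = 1 := by
  classical
  have hn0 : 0 < n := lt_of_le_of_lt (Nat.zero_le _) hT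
  haveI : Nonempty (Fin n) := Fin.pos_iff_nonempty.mp hn0
  set P := cols A T * (cols A T)ᵀ with hPdef
  set Q := cols A Tᶜ * (cols A Tᶜ)ᵀ with hQdef
  -- P + Q = 1
  have hPQ : P + Q = 1 := by
    rw [← hParseval]
    ext i k
    simp only [hPdef, hQdef, Matrix.add_apply, Matrix.mul_apply, cols, Matrix.of_apply,
      Matrix.transpose_apply]
    rw [Finset.sum_coe_sort T (fun j => A i j * A k j),
      Finset.sum_coe_sort Tᶜ (fun j => A i j * A k j)]
    exact Finset.sum_add_sum_compl T _
  set gP := Stmt0Aux.clm P with hgP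
  set gQ := Stmt0Aux.clm Q with hgQ
  have hPh : P.IsHermitian := Stmt0Aux.mul_transpose_isHermitian (cols A T)
  have hQh : Q.IsHermitian := Stmt0Aux.mul_transpose_isHermitian (cols A Tᶜ)
  have hPs := Stmt0Aux.isSymm_clm hPh
  have hQs := Stmt0Aux.isSymm_clm hQh
  have hPpos : ∀ x : EuclideanSpace ℝ (Fin n), 0 ≤ ⟪x, gP x⟫_ℝ := fun x =>
    Stmt0Aux.inner_clm_mul_transpose_nonneg (cols A T) x
  have hQpos : ∀ x : EuclideanSpace ℝ (Fin n), 0 ≤ ⟪x, gQ x⟫_ℝ := fun x =>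
    Stmt0Aux.inner_clm_mul_transpose_nonneg (cols A Tᶜ) x
  have hsumCLM : gP + gQ = 1 := by
    rw [hgP, hgQ, Stmt0Aux.clm, Stmt0Aux.clm, ← map_add, hPQ, _root_.map_one]
  have happ_sum : ∀ x : EuclideanSpace ℝ (Fin n), gP x + gQ x = x := by
    intro x
    have := congrFun (congrArg DFunLike.coe hsumCLM) x
    simpa using this
  have hPle : ∀ x : EuclideanSpace ℝ (Fin n), ⟪x, gP x⟫_ℝ ≤ ‖x‖ ^ 2 := by
    intro x
    have : gP x = x - gQ x := eq_sub_of_add_eq (happ_sum x)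
    rw [this, inner_sub_right, real_inner_self_eq_norm_sq]
    linarith [hQpos x]
  have hQle : ∀ x : EuclideanSpace ℝ (Fin n), ⟪x, gQ x⟫_ℝ ≤ ‖x‖ ^ 2 := by
    intro x
    have : gQ x = x - gP x := eq_sub_of_add_eq ((add_comm (gP x) (gQ x)) ▸ happ_sum x)
    rw [this, inner_sub_right, real_inner_self_eq_norm_sq]
    linarith [hPpos x]
  -- gQ is injective (invertible)
  have hQunit : IsUnit gQ := by
    have := hinv.map (Matrix.toEuclideanCLM (𝕜 := ℝ)
      (n := Fin n) : Matrix (Fin n) (Fin n) ℝ →* (EuclideanSpace ℝ (Fin n) →L[ℝ]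
        EuclideanSpace ℝ (Fin n)))
    exact this
  -- Part 1 : ‖gP‖ < 1
  have part1 : ‖gP‖ < 1 := by
    set μ := hPs.eigenvalues finrank_euclideanSpace_fin with hμ
    set b := hPs.eigenvectorBasis finrank_euclideanSpace_fin with hb
    have hμinner : ∀ i, μ i = ⟪b i, gP (b i)⟫_ℝ := fun i => Stmt0Aux.ev_eq_inner gP hPs i
    have hμ0 : ∀ i, 0 ≤ μ i := fun i => (hμinner i) ▸ hPpos (b i)
    have hμlt : ∀ i, μ i < 1 := by
      intro i
      have hμle1 : μ i ≤ 1 := by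
        calc μ i = ⟪b i, gP (b i)⟫_ℝ := hμinner i
          _ ≤ ‖b i‖ ^ 2 := hPle (b i)
          _ = 1 := by rw [b.orthonormal.1 i]; norm_num
      rcases lt_or_eq_of_le hμle1 with h | h
      · exact h
      · exfalso
        have happP : gP (b i) = b i := by
          have h3 : gP (b i) = μ i • b i :=
            hPs.apply_eigenvectorBasis finrank_euclideanSpace_fin i
          rw [h3, h, one_smul]
        have hQ0 : gQ (b i) = 0 := by
          have h4 := happ_sum (b i)
          rw [happP] at h4
          exact add_eq_left.mp h4
        obtain ⟨u, hu⟩ := hQunit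
        have hbz : b i = 0 := by
          have h1 : (↑u⁻¹ * ↑u : EuclideanSpace ℝ (Fin n) →L[ℝ] EuclideanSpace ℝ (Fin n))
              = 1 := u.inv_mul
          have h2 : (↑u⁻¹ : EuclideanSpace ℝ (Fin n) →L[ℝ] EuclideanSpace ℝ (Fin n))
              (gQ (b i)) = b i := by
            calc (↑u⁻¹ : EuclideanSpace ℝ (Fin n) →L[ℝ] EuclideanSpace ℝ (Fin n)) (gQ (b i))
                = ((↑u⁻¹ * ↑u : EuclideanSpace ℝ (Fin n) →L[ℝ]
                    EuclideanSpace ℝ (Fin n))) (b i) := by rw [hu]; rfl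
              _ = b i := by rw [h1]; rfl
          rw [hQ0, map_zero] at h2
          exact h2.symm
        exact b.toBasis.ne_zero i hbz
    set c := Finset.univ.sup' Finset.univ_nonempty μ with hc
    have hcle : ∀ i, μ i ≤ c := fun i => Finset.le_sup' μ (Finset.mem_univ i)
    have hc0 : 0 ≤ c := le_trans (hμ0 (Classical.arbitrary _)) (hcle _)
    have hclt : c < 1 := by
      rw [hc, Finset.sup'_lt_iff]
      exact fun i _ => hμlt i
    exact lt_of_le_of_lt
      (Stmt0Aux.opNorm_le_of_ev gP hPs c hc0 fun i => by
        rw [abs_of_nonneg (hμ0 i)]; exact hcle i) hclt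
  -- Part 2 : ‖gQ‖ = 1
  have part2 : ‖gQ‖ = 1 := by
    have hle : ‖gQ‖ ≤ 1 := by
      set ν := hQs.eigenvalues finrank_euclideanSpace_fin with hν
      set b := hQs.eigenvectorBasis finrank_euclideanSpace_fin with hb
      have hνinner : ∀ i, ν i = ⟪b i, gQ (b i)⟫_ℝ := fun i => Stmt0Aux.ev_eq_inner gQ hQs i
      apply Stmt0Aux.opNorm_le_of_ev gQ hQs 1 zero_le_one
      intro i
      rw [abs_le]
      constructor
      · have := hQpos (b i)
        rw [← hνinner i] at this
        linarith
      · have := hQle (b i)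
        rw [← hνinner i, b.orthonormal.1 i] at this
        simpa using this
    have hge : 1 ≤ ‖gQ‖ := by
      -- find a nonzero x with (cols A T)ᵀ *ᵥ x = 0
      have hnotinj : ¬ Function.Injective (Matrix.mulVecLin (cols A T)ᵀ) := by
        intro hinj
        have hle' := LinearMap.finrank_le_finrank_of_injective hinj
        rw [Module.finrank_fintype_fun_eq_card, Module.finrank_fintype_fun_eq_card,
          Fintype.card_fin, Fintype.card_coe] at hle'
        omega
      rw [Function.not_injective_iff] at hnotinj
      obtain ⟨a, b', hab, hne⟩ := hnotinj
      set x0 : Fin n → ℝ := a - b' with hx0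
      have hx0ne : x0 ≠ 0 := sub_ne_zero_of_ne hne
      have hker : (cols A T)ᵀ *ᵥ x0 = 0 := by
        have h5 : Matrix.mulVecLin (cols A T)ᵀ x0 = 0 := by
          rw [hx0, map_sub, hab, sub_self]
        rw [← Matrix.mulVecLin_apply]
        exact h5
      have hPx0 : P *ᵥ x0 = 0 := by
        rw [hPdef, ← Matrix.mulVec_mulVec, hker, Matrix.mulVec_zero]
      have hQx0 : Q *ᵥ x0 = x0 := by
        have hQeq : Q = 1 - P := by
          rw [← hPQ]; abel
        rw [hQeq, Matrix.sub_mulVec, hPx0, Matrix.one_mulVec, sub_zero]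
      set x' : EuclideanSpace ℝ (Fin n) := (WithLp.equiv 2 (Fin n → ℝ)).symm x0 with hx'
      have hfix : gQ x' = x' := by
        apply PiLp.ext
        intro i
        rw [hgQ, Stmt0Aux.clm_apply]
        have : (fun j => x' j) = x0 := rfl
        rw [this, hQx0]
        rfl
      have hx'ne : x' ≠ 0 := by
        intro h
        apply hx0ne
        have := congrArg (WithLp.equiv 2 (Fin n → ℝ)) h
        simpa [hx'] using this
      have hx'pos : 0 < ‖x'‖ := norm_pos_iff.mpr hx'ne
      have := gQ.le_opNorm x'
      rw [hfix] at this
      nlinarith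
    linarith
  exact ⟨by rw [Stmt0Aux.specNorm_eq_clm]; exact part1,
    by rw [Stmt0Aux.specNorm_eq_clm]; exact part2⟩
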